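/- For every m ≥ 1, if S is a real m × m skew-symmetric matrix (Sᵀ = −S) and P is a real m × m symmetric positive definite matrix, then det(S + P) > 0. (In particular, the wedge {S + P : S skew, P symmetric positive definite} is contained in the cone V = {X : det X > 0} of real m × m matrices of positive determinant.) -/

import Mathlib

open Matrix

lemma skew_quad_zero {m : ℕ} (S : Matrix (Fin m) (Fin m) ℝ) (hS : Sᵀ = -S)
    (v : Fin m → ℝ) : v ⬝ᵥ S.mulVec v = 0 := by
  have h : v ⬝ᵥ S.mulVec v = -(v ⬝ᵥ S.mulVec v) := by
    calc v ⬝ᵥ S.mulVec v = (Sᵀ.mulVec v) ⬝ᵥ v := by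
          rw [Matrix.dotProduct_mulVec, ← Matrix.vecMul_transpose, Matrix.transpose_transpose]
      _ = ((-S).mulVec v) ⬝ᵥ v := by rw [hS]
      _ = -(v ⬝ᵥ S.mulVec v) := by
          rw [Matrix.neg_mulVec, neg_dotProduct, dotProduct_comm]
  linarith

lemma det_ne_zero_aux {m : ℕ} (S P : Matrix (Fin m) (Fin m) ℝ)
    (hS : Sᵀ = -S) (hP : P.PosDef) (t : ℝ) : (t • S + P).det ≠ 0 := by
  intro h
  obtain ⟨v, hv, hveq⟩ := (Matrix.exists_mulVec_eq_zero_iff).2 h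
  have h1 : v ⬝ᵥ (t • S + P).mulVec v = 0 := by rw [hveq, dotProduct_zero]
  have h2 : v ⬝ᵥ (t • S).mulVec v = 0 := by
    have : (t • S)ᵀ = -(t • S) := by rw [Matrix.transpose_smul, hS, smul_neg]
    exact skew_quad_zero _ this v
  have h3 : 0 < v ⬝ᵥ P.mulVec v := by
    have := hP.dotProduct_mulVec_pos hv
    simpa using this
  rw [Matrix.add_mulVec, dotProduct_add, h2, zero_add] at h1
  linarith

theorem stmt_12 (m : ℕ) (hm : 1 ≤ m)
    (S P : Matrix (Fin m) (Fin m) ℝ)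
    (hS : Sᵀ = -S) (hP : P.PosDef) :
    0 < (S + P).det := by
  set f : ℝ → ℝ := fun t => (t • S + P).det with hf
  have hcont : Continuous f := by
    apply Continuous.matrix_det
    fun_prop
  have hne : ∀ t, f t ≠ 0 := fun t => det_ne_zero_aux S P hS hP t
  have hf0 : 0 < f 0 := by
    simpa [hf] using hP.det_pos
  have hf1 : f 1 = (S + P).det := by simp [hf]
  rcases lt_or_ge 0 (f 1) with h | h
  · rwa [hf1] at h
  · exfalso
    have : (0 : ℝ) ∈ Set.Icc (f 1) (f 0) := ⟨h, le_of_lt hf0⟩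
    obtain ⟨t, _, ht⟩ := intermediate_value_Icc' (by norm_num : (0:ℝ) ≤ 1)
      (hcont.continuousOn) this
    exact hne t ht
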